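/- Tanh-type exact solution of system (2-23) with equal diffusivities: Let d > 0 and α₁, α₂, C₂, C₃ be real constants; set C₁ = 10d(α₁² + α₂²) and θ(t,x,y) = C₁t + (α₁x + α₂y)·sin 2t + (α₁y − α₂x)·cos 2t. Then the functions u = (3C₁/5)·(1 + tanh θ)², v = −12C₁/5 + u, w = C₂ + C₃·exp(10θ) − u satisfy system (2-23) with d₁ = d₂ = d₃ = d, i.e. u_t + 2y u_x − 2x u_y = d(u_xx + u_yy) − uv, v_t + 2y v_x − 2x v_y = d(v_xx + v_yy) − uv, w_t + 2y w_x − 2x w_y = d(w_xx + w_yy) + uv, at every point of ℝ³. -/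

import Mathlib

set_option maxHeartbeats 1000000


/-- Partial derivative with respect to `t` of a function of `(t,x,y)`. -/
noncomputable def pdT (f : ℝ × ℝ × ℝ → ℝ) (p : ℝ × ℝ × ℝ) : ℝ := fderiv ℝ f p (1, 0, 0)
/-- Partial derivative with respect to `x`. -/
noncomputable def pdX (f : ℝ × ℝ × ℝ → ℝ) (p : ℝ × ℝ × ℝ) : ℝ := fderiv ℝ f p (0, 1, 0)
/-- Partial derivative with respect to `y`. -/
noncomputable def pdY (f : ℝ × ℝ × ℝ → ℝ) (p : ℝ × ℝ × ℝ) : ℝ := fderiv ℝ f p (0, 0, 1)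

/-- `(u,v,w)` solves system (2-23), the convective Lotka–Volterra system with
stream function `Ψ = x² + y²` and `k = 1`, on `Ω`. -/
def Solves223 (d₁ d₂ d₃ : ℝ) (u v w : ℝ × ℝ × ℝ → ℝ) (Ω : Set (ℝ × ℝ × ℝ)) : Prop :=
  ∀ p ∈ Ω,
    (pdT u p + 2 * p.2.2 * pdX u p - 2 * p.2.1 * pdY u p
      = d₁ * (pdX (pdX u) p + pdY (pdY u) p) - u p * v p) ∧
    (pdT v p + 2 * p.2.2 * pdX v p - 2 * p.2.1 * pdY v p
      = d₂ * (pdX (pdX v) p + pdY (pdY v) p) - u p * v p) ∧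
    (pdT w p + 2 * p.2.2 * pdX w p - 2 * p.2.1 * pdY w p
      = d₃ * (pdX (pdX w) p + pdY (pdY w) p) + u p * v p)

/-- The phase `θ(t,x,y) = C₁t + (α₁x + α₂y)·sin 2t + (α₁y − α₂x)·cos 2t`. -/
noncomputable def theta (α₁ α₂ C₁ : ℝ) (p : ℝ × ℝ × ℝ) : ℝ :=
  C₁ * p.1 + (α₁ * p.2.1 + α₂ * p.2.2) * Real.sin (2 * p.1)
    + (α₁ * p.2.2 - α₂ * p.2.1) * Real.cos (2 * p.1)

-- tanh derivative
lemma hasDerivAt_tanh' (s : ℝ) : HasDerivAt Real.tanh (1 - Real.tanh s ^ 2) s := by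
  have hc : Real.cosh s ≠ 0 := (Real.cosh_pos s).ne'
  have h := (Real.hasDerivAt_sinh s).div (Real.hasDerivAt_cosh s) hc
  have hfun : Real.tanh = fun x => Real.sinh x / Real.cosh x :=
    funext fun x => Real.tanh_eq_sinh_div_cosh x
  have h2 : HasDerivAt Real.tanh
      ((Real.cosh s * Real.cosh s - Real.sinh s * Real.sinh s) / Real.cosh s ^ 2) s := by
    rw [hfun]; exact h
  convert h2 using 1
  rw [Real.tanh_eq_sinh_div_cosh]
  field_simp

noncomputable def Dθ (a b c : ℝ) : ℝ × ℝ × ℝ →L[ℝ] ℝ :=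
  a • (ContinuousLinearMap.fst ℝ ℝ (ℝ × ℝ)) +
  b • ((ContinuousLinearMap.fst ℝ ℝ ℝ).comp (ContinuousLinearMap.snd ℝ ℝ (ℝ × ℝ))) +
  c • ((ContinuousLinearMap.snd ℝ ℝ ℝ).comp (ContinuousLinearMap.snd ℝ ℝ (ℝ × ℝ)))

@[simp] lemma Dθ_apply (a b c : ℝ) (v : ℝ × ℝ × ℝ) :
    Dθ a b c v = a * v.1 + b * v.2.1 + c * v.2.2 := by
  simp [Dθ]

lemma hasFDerivAt_theta (α₁ α₂ C₁ : ℝ) (p : ℝ × ℝ × ℝ) :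
    HasFDerivAt (theta α₁ α₂ C₁)
      (Dθ (C₁ + 2 * (α₁ * p.2.1 + α₂ * p.2.2) * Real.cos (2 * p.1)
            - 2 * (α₁ * p.2.2 - α₂ * p.2.1) * Real.sin (2 * p.1))
          (α₁ * Real.sin (2 * p.1) - α₂ * Real.cos (2 * p.1))
          (α₂ * Real.sin (2 * p.1) + α₁ * Real.cos (2 * p.1))) p := by
  have ht : HasFDerivAt (fun q : ℝ × ℝ × ℝ => q.1)
      (ContinuousLinearMap.fst ℝ ℝ (ℝ × ℝ)) p := hasFDerivAt_fst
  have hx : HasFDerivAt (fun q : ℝ × ℝ × ℝ => q.2.1)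
      ((ContinuousLinearMap.fst ℝ ℝ ℝ).comp (ContinuousLinearMap.snd ℝ ℝ (ℝ × ℝ))) p :=
    hasFDerivAt_fst.comp p hasFDerivAt_snd
  have hy : HasFDerivAt (fun q : ℝ × ℝ × ℝ => q.2.2)
      ((ContinuousLinearMap.snd ℝ ℝ ℝ).comp (ContinuousLinearMap.snd ℝ ℝ (ℝ × ℝ))) p :=
    hasFDerivAt_snd.comp p hasFDerivAt_snd
  have h2t : HasFDerivAt (fun q : ℝ × ℝ × ℝ => 2 * q.1)
      ((2 : ℝ) • ContinuousLinearMap.fst ℝ ℝ (ℝ × ℝ)) p := ht.const_mul 2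
  have hsin : HasFDerivAt (fun q : ℝ × ℝ × ℝ => Real.sin (2 * q.1))
      (Real.cos (2 * p.1) • ((2 : ℝ) • ContinuousLinearMap.fst ℝ ℝ (ℝ × ℝ))) p :=
    HasDerivAt.comp_hasFDerivAt (h₂ := Real.sin) p (Real.hasDerivAt_sin (2 * p.1)) h2t
  have hcos : HasFDerivAt (fun q : ℝ × ℝ × ℝ => Real.cos (2 * q.1))
      ((-Real.sin (2 * p.1)) • ((2 : ℝ) • ContinuousLinearMap.fst ℝ ℝ (ℝ × ℝ))) p :=
    HasDerivAt.comp_hasFDerivAt (h₂ := Real.cos) p (Real.hasDerivAt_cos (2 * p.1)) h2t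
  have h := (((ht.const_mul C₁).add
      (((hx.const_mul α₁).add (hy.const_mul α₂)).mul hsin)).add
      (((hy.const_mul α₁).sub (hx.const_mul α₂)).mul hcos))
  refine h.congr_fderiv ?_
  ext <;> · simp [Dθ]; ring

section Master

variable (α₁ α₂ C₁ : ℝ)

local notation "θ" => theta α₁ α₂ C₁

lemma master (F F' F'' : ℝ → ℝ) (hF : ∀ s, HasDerivAt F (F' s) s)
    (hF' : ∀ s, HasDerivAt F' (F'' s) s) (p : ℝ × ℝ × ℝ) :
    pdT (fun q => F (θ q)) p
      = F' (θ p) * (C₁ + 2 * (α₁ * p.2.1 + α₂ * p.2.2) * Real.cos (2 * p.1)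
          - 2 * (α₁ * p.2.2 - α₂ * p.2.1) * Real.sin (2 * p.1)) ∧
    pdX (fun q => F (θ q)) p
      = F' (θ p) * (α₁ * Real.sin (2 * p.1) - α₂ * Real.cos (2 * p.1)) ∧
    pdY (fun q => F (θ q)) p
      = F' (θ p) * (α₂ * Real.sin (2 * p.1) + α₁ * Real.cos (2 * p.1)) ∧
    pdX (pdX (fun q => F (θ q))) p
      = F'' (θ p) * (α₁ * Real.sin (2 * p.1) - α₂ * Real.cos (2 * p.1)) ^ 2 ∧
    pdY (pdY (fun q => F (θ q))) p
      = F'' (θ p) * (α₂ * Real.sin (2 * p.1) + α₁ * Real.cos (2 * p.1)) ^ 2 := by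
  have hcomp : ∀ q : ℝ × ℝ × ℝ, HasFDerivAt (fun q => F (θ q))
      (F' (θ q) • Dθ (C₁ + 2 * (α₁ * q.2.1 + α₂ * q.2.2) * Real.cos (2 * q.1)
            - 2 * (α₁ * q.2.2 - α₂ * q.2.1) * Real.sin (2 * q.1))
          (α₁ * Real.sin (2 * q.1) - α₂ * Real.cos (2 * q.1))
          (α₂ * Real.sin (2 * q.1) + α₁ * Real.cos (2 * q.1))) q :=
    fun q => (hF (θ q)).comp_hasFDerivAt q (hasFDerivAt_theta α₁ α₂ C₁ q)
  have hcomp' : ∀ q : ℝ × ℝ × ℝ, HasFDerivAt (fun q => F' (θ q))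
      (F'' (θ q) • Dθ (C₁ + 2 * (α₁ * q.2.1 + α₂ * q.2.2) * Real.cos (2 * q.1)
            - 2 * (α₁ * q.2.2 - α₂ * q.2.1) * Real.sin (2 * q.1))
          (α₁ * Real.sin (2 * q.1) - α₂ * Real.cos (2 * q.1))
          (α₂ * Real.sin (2 * q.1) + α₁ * Real.cos (2 * q.1))) q :=
    fun q => (hF' (θ q)).comp_hasFDerivAt q (hasFDerivAt_theta α₁ α₂ C₁ q)
  have h2t : ∀ q : ℝ × ℝ × ℝ, HasFDerivAt (fun q : ℝ × ℝ × ℝ => 2 * q.1)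
      ((2 : ℝ) • ContinuousLinearMap.fst ℝ ℝ (ℝ × ℝ)) q :=
    fun q => hasFDerivAt_fst.const_mul 2
  have hsin : ∀ q : ℝ × ℝ × ℝ, HasFDerivAt (fun q : ℝ × ℝ × ℝ => Real.sin (2 * q.1))
      (Real.cos (2 * q.1) • ((2 : ℝ) • ContinuousLinearMap.fst ℝ ℝ (ℝ × ℝ))) q :=
    fun q => HasDerivAt.comp_hasFDerivAt (h₂ := Real.sin) q (Real.hasDerivAt_sin (2 * q.1)) (h2t q)
  have hcos : ∀ q : ℝ × ℝ × ℝ, HasFDerivAt (fun q : ℝ × ℝ × ℝ => Real.cos (2 * q.1))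
      ((-Real.sin (2 * q.1)) • ((2 : ℝ) • ContinuousLinearMap.fst ℝ ℝ (ℝ × ℝ))) q :=
    fun q => HasDerivAt.comp_hasFDerivAt (h₂ := Real.cos) q (Real.hasDerivAt_cos (2 * q.1)) (h2t q)
  have hxfun : pdX (fun q => F (θ q))
      = fun q => F' (θ q) * (α₁ * Real.sin (2 * q.1) - α₂ * Real.cos (2 * q.1)) := by
    funext q
    unfold pdX
    rw [(hcomp q).fderiv]
    simp only [ContinuousLinearMap.add_apply, ContinuousLinearMap.sub_apply, ContinuousLinearMap.smul_apply, ContinuousLinearMap.coe_comp', Function.comp, ContinuousLinearMap.coe_fst', ContinuousLinearMap.coe_snd', Dθ_apply, smul_eq_mul]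
    ring
  have hyfun : pdY (fun q => F (θ q))
      = fun q => F' (θ q) * (α₂ * Real.sin (2 * q.1) + α₁ * Real.cos (2 * q.1)) := by
    funext q
    unfold pdY
    rw [(hcomp q).fderiv]
    simp only [ContinuousLinearMap.add_apply, ContinuousLinearMap.sub_apply, ContinuousLinearMap.smul_apply, ContinuousLinearMap.coe_comp', Function.comp, ContinuousLinearMap.coe_fst', ContinuousLinearMap.coe_snd', Dθ_apply, smul_eq_mul]
    ring
  refine ⟨?_, ?_, ?_, ?_, ?_⟩
  · unfold pdT; rw [(hcomp p).fderiv]; simp only [ContinuousLinearMap.add_apply, ContinuousLinearMap.sub_apply, ContinuousLinearMap.smul_apply, ContinuousLinearMap.coe_comp', Function.comp, ContinuousLinearMap.coe_fst', ContinuousLinearMap.coe_snd', Dθ_apply, smul_eq_mul]; ring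
  · unfold pdX; rw [(hcomp p).fderiv]; simp only [ContinuousLinearMap.add_apply, ContinuousLinearMap.sub_apply, ContinuousLinearMap.smul_apply, ContinuousLinearMap.coe_comp', Function.comp, ContinuousLinearMap.coe_fst', ContinuousLinearMap.coe_snd', Dθ_apply, smul_eq_mul]; ring
  · unfold pdY; rw [(hcomp p).fderiv]; simp only [ContinuousLinearMap.add_apply, ContinuousLinearMap.sub_apply, ContinuousLinearMap.smul_apply, ContinuousLinearMap.coe_comp', Function.comp, ContinuousLinearMap.coe_fst', ContinuousLinearMap.coe_snd', Dθ_apply, smul_eq_mul]; ring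
  · rw [hxfun]
    have hg : HasFDerivAt (fun q : ℝ × ℝ × ℝ =>
        α₁ * Real.sin (2 * q.1) - α₂ * Real.cos (2 * q.1))
        ((α₁ • (Real.cos (2 * p.1) • ((2 : ℝ) • ContinuousLinearMap.fst ℝ ℝ (ℝ × ℝ))))
          - (α₂ • ((-Real.sin (2 * p.1)) • ((2 : ℝ) • ContinuousLinearMap.fst ℝ ℝ (ℝ × ℝ))))) p := by
      refine ((hsin p).const_mul α₁ |>.sub ((hcos p).const_mul α₂)).congr_fderiv ?_
      ext <;> · simp; try ring
    have hprod := (hcomp' p).fun_mul hg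
    unfold pdX
    rw [hprod.fderiv]
    simp only [ContinuousLinearMap.add_apply, ContinuousLinearMap.sub_apply, ContinuousLinearMap.smul_apply, ContinuousLinearMap.coe_comp', Function.comp, ContinuousLinearMap.coe_fst', ContinuousLinearMap.coe_snd', Dθ_apply, smul_eq_mul]
    ring
  · rw [hyfun]
    have hg : HasFDerivAt (fun q : ℝ × ℝ × ℝ =>
        α₂ * Real.sin (2 * q.1) + α₁ * Real.cos (2 * q.1))
        ((α₂ • (Real.cos (2 * p.1) • ((2 : ℝ) • ContinuousLinearMap.fst ℝ ℝ (ℝ × ℝ))))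
          + (α₁ • ((-Real.sin (2 * p.1)) • ((2 : ℝ) • ContinuousLinearMap.fst ℝ ℝ (ℝ × ℝ))))) p := by
      refine ((hsin p).const_mul α₂ |>.add ((hcos p).const_mul α₁)).congr_fderiv ?_
      ext <;> · simp; try ring
    have hprod := (hcomp' p).fun_mul hg
    unfold pdY
    rw [hprod.fderiv]
    simp only [ContinuousLinearMap.add_apply, ContinuousLinearMap.sub_apply, ContinuousLinearMap.smul_apply, ContinuousLinearMap.coe_comp', Function.comp, ContinuousLinearMap.coe_fst', ContinuousLinearMap.coe_snd', Dθ_apply, smul_eq_mul]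
    ring

end Master

lemma hFu (A : ℝ) (s : ℝ) :
    HasDerivAt (fun s => A * (1 + Real.tanh s) ^ 2)
      (A * (2 * (1 + Real.tanh s) * (1 - Real.tanh s ^ 2))) s := by
  have h := (((hasDerivAt_tanh' s).const_add 1).pow 2).const_mul A
  refine h.congr_deriv ?_
  push_cast
  ring

lemma hFu' (A : ℝ) (s : ℝ) :
    HasDerivAt (fun s => A * (2 * (1 + Real.tanh s) * (1 - Real.tanh s ^ 2)))
      (A * (2 * (1 - Real.tanh s ^ 2) * (1 - 2 * Real.tanh s - 3 * Real.tanh s ^ 2))) s := by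
  have h1 := (hasDerivAt_tanh' s).const_add 1
  have h2 := ((hasDerivAt_tanh' s).fun_pow 2).const_sub 1
  have h := (h1.mul h2).const_mul (2 * A)
  have hfun : (fun s => A * (2 * (1 + Real.tanh s) * (1 - Real.tanh s ^ 2)))
      = fun s => (2 * A) * ((1 + Real.tanh s) * (1 - Real.tanh s ^ 2)) := by
    funext x; ring
  rw [hfun]
  refine h.congr_deriv ?_
  push_cast
  ring

lemma hFv (A B : ℝ) (s : ℝ) :
    HasDerivAt (fun s => -B + A * (1 + Real.tanh s) ^ 2)
      (A * (2 * (1 + Real.tanh s) * (1 - Real.tanh s ^ 2))) s := by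
  have h := (hFu A s).const_add (-B)
  convert h using 1

lemma hFw (A B C₃ : ℝ) (s : ℝ) :
    HasDerivAt (fun s => B + C₃ * Real.exp (10 * s) - A * (1 + Real.tanh s) ^ 2)
      (C₃ * (10 * Real.exp (10 * s)) - A * (2 * (1 + Real.tanh s) * (1 - Real.tanh s ^ 2))) s := by
  have he : HasDerivAt (fun s : ℝ => 10 * s) 10 s := by
    simpa using (hasDerivAt_id s).const_mul 10
  have h := (((he.exp.const_mul C₃).const_add B).sub (hFu A s))
  refine h.congr_deriv ?_
  ring

lemma hFw' (A C₃ : ℝ) (s : ℝ) :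
    HasDerivAt (fun s => C₃ * (10 * Real.exp (10 * s))
        - A * (2 * (1 + Real.tanh s) * (1 - Real.tanh s ^ 2)))
      (C₃ * (100 * Real.exp (10 * s))
        - A * (2 * (1 - Real.tanh s ^ 2) * (1 - 2 * Real.tanh s - 3 * Real.tanh s ^ 2))) s := by
  have he : HasDerivAt (fun s : ℝ => 10 * s) 10 s := by
    simpa using (hasDerivAt_id s).const_mul 10
  have h := ((he.exp.const_mul (C₃ * 10)).sub (hFu' A s))
  have hfun : (fun s => C₃ * (10 * Real.exp (10 * s))
        - A * (2 * (1 + Real.tanh s) * (1 - Real.tanh s ^ 2)))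
      = fun s => (C₃ * 10) * Real.exp (10 * s)
        - A * (2 * (1 + Real.tanh s) * (1 - Real.tanh s ^ 2)) := by
    funext x; ring
  rw [hfun]
  refine h.congr_deriv ?_
  ring

/-- Tanh-type exact solution of system (2-23) with `d₁ = d₂ = d₃ = d`:
with `C₁ = 10d(α₁²+α₂²)`, the functions `u = (3C₁/5)(1 + tanh θ)²`,
`v = −12C₁/5 + u`, `w = C₂ + C₃e^{10θ} − u` solve (2-23) on all of `ℝ³`. -/
theorem tanh_exact_solution
    (d α₁ α₂ C₂ C₃ : ℝ) (hd : 0 < d) :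
    Solves223 d d d
      (fun p => (3 * (10 * d * (α₁ ^ 2 + α₂ ^ 2)) / 5) *
        (1 + Real.tanh (theta α₁ α₂ (10 * d * (α₁ ^ 2 + α₂ ^ 2)) p)) ^ 2)
      (fun p => -(12 * (10 * d * (α₁ ^ 2 + α₂ ^ 2)) / 5)
        + (3 * (10 * d * (α₁ ^ 2 + α₂ ^ 2)) / 5) *
          (1 + Real.tanh (theta α₁ α₂ (10 * d * (α₁ ^ 2 + α₂ ^ 2)) p)) ^ 2)
      (fun p => C₂ + C₃ * Real.exp (10 * theta α₁ α₂ (10 * d * (α₁ ^ 2 + α₂ ^ 2)) p)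
        - (3 * (10 * d * (α₁ ^ 2 + α₂ ^ 2)) / 5) *
          (1 + Real.tanh (theta α₁ α₂ (10 * d * (α₁ ^ 2 + α₂ ^ 2)) p)) ^ 2)
      Set.univ := by
  intro p _
  obtain ⟨hu1, hu2, hu3, hu4, hu5⟩ :=
    master α₁ α₂ (10 * d * (α₁ ^ 2 + α₂ ^ 2)) (fun s => 3 * (10 * d * (α₁ ^ 2 + α₂ ^ 2)) / 5 * (1 + Real.tanh s) ^ 2) (fun s => 3 * (10 * d * (α₁ ^ 2 + α₂ ^ 2)) / 5 * (2 * (1 + Real.tanh s) * (1 - Real.tanh s ^ 2))) (fun s => 3 * (10 * d * (α₁ ^ 2 + α₂ ^ 2)) / 5 * (2 * (1 - Real.tanh s ^ 2) * (1 - 2 * Real.tanh s - 3 * Real.tanh s ^ 2)))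
      (fun s => hFu (3 * (10 * d * (α₁ ^ 2 + α₂ ^ 2)) / 5) s) (fun s => hFu' (3 * (10 * d * (α₁ ^ 2 + α₂ ^ 2)) / 5) s) p
  obtain ⟨hv1, hv2, hv3, hv4, hv5⟩ :=
    master α₁ α₂ (10 * d * (α₁ ^ 2 + α₂ ^ 2)) (fun s => -(12 * (10 * d * (α₁ ^ 2 + α₂ ^ 2)) / 5) + 3 * (10 * d * (α₁ ^ 2 + α₂ ^ 2)) / 5 * (1 + Real.tanh s) ^ 2) (fun s => 3 * (10 * d * (α₁ ^ 2 + α₂ ^ 2)) / 5 * (2 * (1 + Real.tanh s) * (1 - Real.tanh s ^ 2))) (fun s => 3 * (10 * d * (α₁ ^ 2 + α₂ ^ 2)) / 5 * (2 * (1 - Real.tanh s ^ 2) * (1 - 2 * Real.tanh s - 3 * Real.tanh s ^ 2)))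
      (fun s => hFv (3 * (10 * d * (α₁ ^ 2 + α₂ ^ 2)) / 5) (12 * (10 * d * (α₁ ^ 2 + α₂ ^ 2)) / 5) s) (fun s => hFu' (3 * (10 * d * (α₁ ^ 2 + α₂ ^ 2)) / 5) s) p
  obtain ⟨hw1, hw2, hw3, hw4, hw5⟩ :=
    master α₁ α₂ (10 * d * (α₁ ^ 2 + α₂ ^ 2)) (fun s => C₂ + C₃ * Real.exp (10 * s) - 3 * (10 * d * (α₁ ^ 2 + α₂ ^ 2)) / 5 * (1 + Real.tanh s) ^ 2) (fun s => C₃ * (10 * Real.exp (10 * s)) - 3 * (10 * d * (α₁ ^ 2 + α₂ ^ 2)) / 5 * (2 * (1 + Real.tanh s) * (1 - Real.tanh s ^ 2))) (fun s => C₃ * (100 * Real.exp (10 * s)) - 3 * (10 * d * (α₁ ^ 2 + α₂ ^ 2)) / 5 * (2 * (1 - Real.tanh s ^ 2) * (1 - 2 * Real.tanh s - 3 * Real.tanh s ^ 2)))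
      (fun s => hFw (3 * (10 * d * (α₁ ^ 2 + α₂ ^ 2)) / 5) C₂ C₃ s) (fun s => hFw' (3 * (10 * d * (α₁ ^ 2 + α₂ ^ 2)) / 5) C₃ s) p
  have hsc := Real.sin_sq_add_cos_sq (2 * p.1)
  refine ⟨?_, ?_, ?_⟩
  · rw [hu1, hu2, hu3, hu4, hu5]
    linear_combination (-(d * (α₁ ^ 2 + α₂ ^ 2) * (3 * (10 * d * (α₁ ^ 2 + α₂ ^ 2)) / 5 * (2 * (1 - (Real.tanh (theta α₁ α₂ (10 * d * (α₁ ^ 2 + α₂ ^ 2)) p)) ^ 2) * (1 - 2 * (Real.tanh (theta α₁ α₂ (10 * d * (α₁ ^ 2 + α₂ ^ 2)) p)) - 3 * (Real.tanh (theta α₁ α₂ (10 * d * (α₁ ^ 2 + α₂ ^ 2)) p)) ^ 2))))) * hsc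
  · rw [hv1, hv2, hv3, hv4, hv5]
    linear_combination (-(d * (α₁ ^ 2 + α₂ ^ 2) * (3 * (10 * d * (α₁ ^ 2 + α₂ ^ 2)) / 5 * (2 * (1 - (Real.tanh (theta α₁ α₂ (10 * d * (α₁ ^ 2 + α₂ ^ 2)) p)) ^ 2) * (1 - 2 * (Real.tanh (theta α₁ α₂ (10 * d * (α₁ ^ 2 + α₂ ^ 2)) p)) - 3 * (Real.tanh (theta α₁ α₂ (10 * d * (α₁ ^ 2 + α₂ ^ 2)) p)) ^ 2))))) * hsc
  · rw [hw1, hw2, hw3, hw4, hw5]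
    linear_combination (-(d * (α₁ ^ 2 + α₂ ^ 2) * (C₃ * (100 * Real.exp (10 * (theta α₁ α₂ (10 * d * (α₁ ^ 2 + α₂ ^ 2)) p))) - 3 * (10 * d * (α₁ ^ 2 + α₂ ^ 2)) / 5 * (2 * (1 - (Real.tanh (theta α₁ α₂ (10 * d * (α₁ ^ 2 + α₂ ^ 2)) p)) ^ 2) * (1 - 2 * (Real.tanh (theta α₁ α₂ (10 * d * (α₁ ^ 2 + α₂ ^ 2)) p)) - 3 * (Real.tanh (theta α₁ α₂ (10 * d * (α₁ ^ 2 + α₂ ^ 2)) p)) ^ 2))))) * hsc
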